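/- Let n ≥ 3 and F a family of subsets of {1,...,n} with ∅, [n] ∉ F and no four distinct members A, B, C, D with A ∪ B ⊆ C ∩ D. Then Σ_{F∈F} |F|!·(n−|F|)! ≤ 2n·(n−1)!. -/

import Mathlib

open Finset Equiv

namespace Stmt15

variable {n : ℕ}

def seg (σ : Equiv.Perm (Fin n)) (S : Finset (Fin n)) : Prop :=
  ∀ i : Fin n, σ i ∈ S ↔ (i : ℕ) < S.card

instance (σ : Equiv.Perm (Fin n)) (S : Finset (Fin n)) : Decidable (seg σ S) := by
  unfold seg; infer_instance

lemma seg_subset {σ : Equiv.Perm (Fin n)} {S T : Finset (Fin n)}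
    (hS : seg σ S) (hT : seg σ T) (h : S.card ≤ T.card) : S ⊆ T := by
  intro x hx
  have h1 := hS (σ.symm x)
  have h2 := hT (σ.symm x)
  rw [Equiv.apply_symm_apply] at h1 h2
  exact h2.mpr (lt_of_lt_of_le (h1.mp hx) h)

lemma seg_ssubset {σ : Equiv.Perm (Fin n)} {S T : Finset (Fin n)}
    (hS : seg σ S) (hT : seg σ T) (h : S ≠ T) : S ⊂ T ∨ T ⊂ S := by
  rcases le_total S.card T.card with hc | hc
  · exact Or.inl (ssubset_of_subset_of_ne (seg_subset hS hT hc) h)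
  · exact Or.inr (ssubset_of_subset_of_ne (seg_subset hT hS hc) (Ne.symm h))

lemma ssne {α : Type*} {s t : Finset α} (h : s ⊂ t) : s ≠ t :=
  (Finset.ssubset_iff_subset_ne.mp h).2

lemma aux_fact {m a : ℕ} (h1 : 1 ≤ a) (h2 : a < m) :
    2 * (a.factorial * (m - a).factorial) ≤ m.factorial := by
  have hm : m - 1 + 1 = m := by omega
  have ha : a - 1 + 1 = a := by omega
  have hc : 2 ≤ m.choose a := by
    have : m.choose a = (m-1).choose (a-1) + (m-1).choose a := by
      conv_lhs => rw [← hm, ← ha]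
      rw [Nat.choose_succ_succ]
      rw [Nat.succ_eq_add_one, ha]
    have p1 : 0 < (m-1).choose (a-1) := Nat.choose_pos (by omega)
    have p2 : 0 < (m-1).choose a := Nat.choose_pos (by omega)
    omega
  calc 2 * (a.factorial * (m - a).factorial)
      ≤ m.choose a * (a.factorial * (m - a).factorial) :=
        Nat.mul_le_mul_right _ hc
    _ = m.factorial := by
        rw [← mul_assoc]
        exact Nat.choose_mul_factorial_mul_factorial (le_of_lt h2)

lemma card_perm_eq {α : Type*} [Fintype α] [DecidableEq α]
    (c₁ c₂ : α → Fin 3)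
    (h : ∀ v, (univ.filter fun a => c₁ a = v).card = (univ.filter fun a => c₂ a = v).card) :
    (univ.filter fun σ : Equiv.Perm α => ∀ a, c₂ (σ a) = c₁ a).card
      = ∏ v : Fin 3, (univ.filter fun a => c₁ a = v).card.factorial := by
  have fibEq : ∀ v, Fintype.card {a // c₁ a = v} = Fintype.card {a // c₂ a = v} := by
    intro v
    simp only [Fintype.card_subtype]
    exact h v
  let eF : ∀ v, {a // c₁ a = v} ≃ {a // c₂ a = v} := fun v => Fintype.equivOfCardEq (fibEq v)
  let σ₀ : Equiv.Perm α := ((Equiv.sigmaFiberEquiv c₁).symm.trans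
      (Equiv.sigmaCongrRight eF)).trans (Equiv.sigmaFiberEquiv c₂)
  have hσ₀ : ∀ a, c₂ (σ₀ a) = c₁ a := by
    intro a
    exact (eF (c₁ a) ⟨a, rfl⟩).prop
  have step1 : (univ.filter fun σ : Equiv.Perm α => ∀ a, c₂ (σ a) = c₁ a).card
      = (univ.filter fun τ : Equiv.Perm α => ∀ a, c₁ (τ a) = c₁ a).card := by
    apply Finset.card_nbij' (fun σ => σ.trans σ₀.symm) (fun τ => τ.trans σ₀)
    · intro σ hσ
      simp only [mem_coe, mem_filter, mem_univ, true_and] at hσ ⊢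
      intro a
      have := hσ₀ (σ₀.symm (σ a))
      rw [Equiv.apply_symm_apply] at this
      simpa [Equiv.trans_apply, ← this] using hσ a
    · intro τ hτ
      simp only [mem_coe, mem_filter, mem_univ, true_and] at hτ ⊢
      intro a
      simpa [Equiv.trans_apply, hσ₀ (τ a)] using hτ a
    · intro σ _
      ext a
      simp [Equiv.trans_apply]
    · intro τ _
      ext a
      simp [Equiv.trans_apply]
  rw [step1]
  have step2 : (univ.filter fun τ : Equiv.Perm α => ∀ a, c₁ (τ a) = c₁ a).card
      = Fintype.card {g : Equiv.Perm α // c₁ ∘ g = c₁} := by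
    rw [Fintype.card_subtype]
    congr 1
    ext τ
    simp [funext_iff, Function.comp]
  rw [step2, DomMulAct.stabilizer_card]
  exact Finset.prod_congr rfl fun v _ => by rw [Fintype.card_subtype]

def posC (a b : ℕ) : Fin n → Fin 3 := fun i =>
  if (i : ℕ) < a then 0 else if (i : ℕ) < b then 1 else 2

def setC (A B : Finset (Fin n)) : Fin n → Fin 3 := fun x =>
  if x ∈ A then 0 else if x ∈ B then 1 else 2

lemma card_filter_Ico (a b : ℕ) (hb : b ≤ n) :
    (univ.filter fun i : Fin n => a ≤ (i : ℕ) ∧ (i : ℕ) < b).card = b - a := by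
  have hmem : ∀ m ∈ Finset.Ico a b, m < n := fun m hm =>
    lt_of_lt_of_le (Finset.mem_Ico.mp hm).2 hb
  have : (univ.filter fun i : Fin n => a ≤ (i : ℕ) ∧ (i : ℕ) < b)
      = Finset.attachFin (Finset.Ico a b) hmem := by
    ext i
    simp [Finset.mem_attachFin, Finset.mem_Ico]
  rw [this, Finset.card_attachFin, Nat.card_Ico]

lemma posC_fib0 (a b : ℕ) (hab : a ≤ b) (hb : b ≤ n) :
    (univ.filter fun i : Fin n => posC a b i = 0).card = a := by
  have : (univ.filter fun i : Fin n => posC a b i = 0)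
      = (univ.filter fun i : Fin n => 0 ≤ (i : ℕ) ∧ (i : ℕ) < a) := by
    apply filter_congr
    intro i _
    unfold posC
    split_ifs with h1 h2 <;> simp <;> omega
  rw [this, card_filter_Ico 0 a (le_trans hab hb)]
  omega

lemma posC_fib1 (a b : ℕ) (hab : a ≤ b) (hb : b ≤ n) :
    (univ.filter fun i : Fin n => posC a b i = 1).card = b - a := by
  have : (univ.filter fun i : Fin n => posC a b i = 1)
      = (univ.filter fun i : Fin n => a ≤ (i : ℕ) ∧ (i : ℕ) < b) := by
    apply filter_congr
    intro i _
    unfold posC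
    split_ifs with h1 h2 <;> simp <;> omega
  rw [this, card_filter_Ico a b hb]

lemma posC_fib2 (a b : ℕ) (hab : a ≤ b) (hb : b ≤ n) :
    (univ.filter fun i : Fin n => posC a b i = 2).card = n - b := by
  have : (univ.filter fun i : Fin n => posC a b i = 2)
      = (univ.filter fun i : Fin n => b ≤ (i : ℕ) ∧ (i : ℕ) < n) := by
    apply filter_congr
    intro i _
    unfold posC
    have := i.isLt
    split_ifs with h1 h2 <;> simp <;> omega
  rw [this, card_filter_Ico b n le_rfl]

lemma setC_fib0 (A B : Finset (Fin n)) (hAB : A ⊆ B) :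
    (univ.filter fun x : Fin n => setC A B x = 0).card = A.card := by
  congr 1
  ext x
  unfold setC
  simp only [mem_filter, mem_univ, true_and]
  split_ifs with h1 h2 <;> simp_all

lemma setC_fib1 (A B : Finset (Fin n)) (hAB : A ⊆ B) :
    (univ.filter fun x : Fin n => setC A B x = 1).card = B.card - A.card := by
  have : (univ.filter fun x : Fin n => setC A B x = 1) = B \ A := by
    ext x
    unfold setC
    simp only [mem_filter, mem_univ, true_and, mem_sdiff]
    split_ifs with h1 h2 <;> simp_all
  rw [this, card_sdiff_of_subset hAB]

lemma setC_fib2 (A B : Finset (Fin n)) (hAB : A ⊆ B) :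
    (univ.filter fun x : Fin n => setC A B x = 2).card = n - B.card := by
  have : (univ.filter fun x : Fin n => setC A B x = 2) = Bᶜ := by
    ext x
    unfold setC
    simp only [mem_filter, mem_univ, true_and, mem_compl]
    by_cases h1 : x ∈ A
    · simp [h1, hAB h1]
    · by_cases h2 : x ∈ B <;> simp [h1, h2]
  rw [this, card_compl, Fintype.card_fin]

lemma setC_posC_iff {A B : Finset (Fin n)} (hAB : A ⊆ B) {a b : ℕ} (hab : a ≤ b)
    (x i : Fin n) :
    setC A B x = posC a b i ↔ ((x ∈ A ↔ (i:ℕ) < a) ∧ (x ∈ B ↔ (i:ℕ) < b)) := by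
  unfold setC posC
  by_cases h1 : x ∈ A
  · have h2 : x ∈ B := hAB h1
    simp only [h1, h2, if_true]
    split_ifs with h3 h4 <;> simp [h1, h2] <;> omega
  · by_cases h2 : x ∈ B
    · simp only [h1, h2, if_false, if_true]
      split_ifs with h3 h4 <;> simp [h1, h2] <;> omega
    · simp only [h1, h2, if_false]
      split_ifs with h3 h4 <;> simp [h1, h2] <;> omega

lemma count_pair {A B : Finset (Fin n)} (hAB : A ⊆ B) :
    (univ.filter fun σ : Equiv.Perm (Fin n) => seg σ A ∧ seg σ B).card
      = A.card.factorial * ((B.card - A.card).factorial * (n - B.card).factorial) := by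
  have hab : A.card ≤ B.card := card_le_card hAB
  have hbn : B.card ≤ n := le_trans (card_le_univ B) (by simp)
  have hfib : ∀ v, (univ.filter fun i : Fin n => posC A.card B.card i = v).card
      = (univ.filter fun x : Fin n => setC A B x = v).card := by
    intro v
    fin_cases v
    · show (univ.filter fun i : Fin n => posC A.card B.card i = 0).card
        = (univ.filter fun x : Fin n => setC A B x = 0).card
      rw [posC_fib0 _ _ hab hbn, setC_fib0 A B hAB]
    · show (univ.filter fun i : Fin n => posC A.card B.card i = 1).card
        = (univ.filter fun x : Fin n => setC A B x = 1).card
      rw [posC_fib1 _ _ hab hbn, setC_fib1 A B hAB]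
    · show (univ.filter fun i : Fin n => posC A.card B.card i = 2).card
        = (univ.filter fun x : Fin n => setC A B x = 2).card
      rw [posC_fib2 _ _ hab hbn, setC_fib2 A B hAB]
  have hfilter : (univ.filter fun σ : Equiv.Perm (Fin n) => seg σ A ∧ seg σ B)
      = (univ.filter fun σ : Equiv.Perm (Fin n) =>
          ∀ i, setC A B (σ i) = posC A.card B.card i) := by
    apply filter_congr
    intro σ _
    constructor
    · rintro ⟨h1, h2⟩ i
      exact (setC_posC_iff hAB hab (σ i) i).mpr ⟨h1 i, h2 i⟩
    · intro h
      exact ⟨fun i => ((setC_posC_iff hAB hab (σ i) i).mp (h i)).1,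
             fun i => ((setC_posC_iff hAB hab (σ i) i).mp (h i)).2⟩
  rw [hfilter]
  have hc := card_perm_eq (posC A.card B.card) (setC A B) hfib
  rw [Fin.prod_univ_three, posC_fib0 _ _ hab hbn, posC_fib1 _ _ hab hbn,
    posC_fib2 _ _ hab hbn, mul_assoc] at hc
  convert hc using 2
  exact (Finset.filter_congr_decidable univ _ _).symm

lemma count_single (S : Finset (Fin n)) :
    (univ.filter fun σ : Equiv.Perm (Fin n) => seg σ S).card
      = S.card.factorial * (n - S.card).factorial := by
  have h : (univ.filter fun σ : Equiv.Perm (Fin n) => seg σ S)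
      = (univ.filter fun σ : Equiv.Perm (Fin n) => seg σ S ∧ seg σ S) := by
    simp
  rw [h, count_pair (Finset.Subset.refl S)]
  simp [Nat.sub_self]

end Stmt15

open Stmt15

theorem stmt_15 (n : ℕ) (hn : 3 ≤ n) (F : Finset (Finset (Fin n)))
    (hempty : ∅ ∉ F) (hfull : (Finset.univ : Finset (Fin n)) ∉ F)
    (hstar : ∀ A ∈ F, ∀ B ∈ F, ∀ C ∈ F, ∀ D ∈ F,
      A ≠ B → A ≠ C → A ≠ D → B ≠ C → B ≠ D → C ≠ D → ¬ (A ∪ B ⊆ C ∩ D)) :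
    ∑ S ∈ F, S.card.factorial * (n - S.card).factorial
      ≤ 2 * n * (n - 1).factorial := by
  have bf : ∀ A ∈ F, ∀ B ∈ F, ∀ C ∈ F, ∀ D ∈ F, A ≠ B → A ≠ C → A ≠ D → B ≠ C → B ≠ D → C ≠ D →
      A ⊆ C → A ⊆ D → B ⊆ C → B ⊆ D → False := by
    intro A hA B hB C hC D hD h1 h2 h3 h4 h5 h6 hac had hbc hbd
    exact hstar A hA B hB C hC D hD h1 h2 h3 h4 h5 h6
      (union_subset (subset_inter hac had) (subset_inter hbc hbd))
  have below : ∀ {A B D S : Finset (Fin n)}, A ∈ F → B ∈ F → D ∈ F → S ∈ F →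
      A ⊂ B → B ⊂ D → S ⊂ B → S = A := by
    intro A B D S hA hB hD hS hAB hBD hSB
    by_contra hne
    exact bf S hS A hA B hB D hD hne (ssne hSB) (ssne (hSB.trans hBD))
      (ssne hAB) (ssne (hAB.trans hBD)) (ssne hBD)
      hSB.subset (hSB.trans hBD).subset hAB.subset (hAB.trans hBD).subset
  have above : ∀ {A B D S : Finset (Fin n)}, A ∈ F → B ∈ F → D ∈ F → S ∈ F →
      A ⊂ B → B ⊂ D → B ⊂ S → S = D := by
    intro A B D S hA hB hD hS hAB hBD hBS
    by_contra hne
    exact bf A hA B hB S hS D hD (ssne hAB) (ssne (hAB.trans hBS)) (ssne (hAB.trans hBD))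
      (ssne hBS) (ssne hBD) hne
      (hAB.trans hBS).subset (hAB.trans hBD).subset hBS.subset hBD.subset
  have antich : ∀ {A B B' D' : Finset (Fin n)}, A ∈ F → B ∈ F → B' ∈ F → D' ∈ F →
      A ⊂ B → B ⊂ B' → B' ⊂ D' → False := by
    intro A B B' D' hA hB hB' hD' hAB hBB' hB'D'
    exact bf A hA B hB B' hB' D' hD' (ssne hAB) (ssne (hAB.trans hBB'))
      (ssne ((hAB.trans hBB').trans hB'D')) (ssne hBB') (ssne (hBB'.trans hB'D')) (ssne hB'D')
      (hAB.trans hBB').subset ((hAB.trans hBB').trans hB'D').subset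
      hBB'.subset (hBB'.trans hB'D').subset
  -- rewrite the sum via chain counting
  have hterm : ∀ S ∈ F, S.card.factorial * (n - S.card).factorial
      = (univ.filter fun σ : Equiv.Perm (Fin n) => seg σ S).card :=
    fun S _ => (count_single S).symm
  rw [Finset.sum_congr rfl hterm]
  have inc : ∑ S ∈ F, (univ.filter fun σ : Equiv.Perm (Fin n) => seg σ S).card
      = ∑ σ : Equiv.Perm (Fin n), (F.filter fun S => seg σ S).card := by
    simp_rw [Finset.card_filter]
    exact Finset.sum_comm
  rw [inc]
  have hcard : (univ : Finset (Equiv.Perm (Fin n))).card = n * (n-1).factorial := by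
    rw [card_univ, Fintype.card_perm, Fintype.card_fin]
    conv_lhs => rw [← Nat.succ_pred_eq_of_pos (show 0 < n by omega), Nat.factorial_succ]
    have h1 : n.pred + 1 = n := Nat.succ_pred_eq_of_pos (by omega)
    have h2 : n.pred = n - 1 := rfl
    rw [h1, h2]
  suffices h : ∑ σ : Equiv.Perm (Fin n), (F.filter fun S => seg σ S).card
      ≤ 2 * (univ : Finset (Equiv.Perm (Fin n))).card by
    calc ∑ σ : Equiv.Perm (Fin n), (F.filter fun S => seg σ S).card
        ≤ 2 * (univ : Finset (Equiv.Perm (Fin n))).card := h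
      _ = 2 * n * (n-1).factorial := by rw [hcard]; ring
  set Mid : Finset (Finset (Fin n)) :=
    F.filter (fun B => (∃ A ∈ F, A ⊂ B) ∧ (∃ D ∈ F, B ⊂ D)) with hMidDef
  rw [← Finset.sum_filter_add_sum_filter_not univ (fun σ => ∃ B ∈ Mid, seg σ B)
    (fun σ => (F.filter fun S => seg σ S).card)]
  have hdisj : ∀ B ∈ Mid, ∀ B' ∈ Mid, B ≠ B' →
      Disjoint (univ.filter fun σ : Equiv.Perm (Fin n) => seg σ B)
        (univ.filter fun σ : Equiv.Perm (Fin n) => seg σ B') := by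
    intro B hB B' hB' hne
    rw [Finset.disjoint_left]
    intro σ hσ hσ'
    have h1 : seg σ B := (mem_filter.mp hσ).2
    have h2 : seg σ B' := (mem_filter.mp hσ').2
    obtain ⟨hBF, ⟨A, hAF, hAB⟩, ⟨D, hDF, hBD⟩⟩ := mem_filter.mp hB
    obtain ⟨hB'F, ⟨A', hA'F, hA'B'⟩, ⟨D', hD'F, hB'D'⟩⟩ := mem_filter.mp hB'
    rcases seg_ssubset h1 h2 hne with hlt | hlt
    · exact antich hAF hBF hB'F hD'F hAB hlt hB'D'
    · exact antich hA'F hB'F hBF hDF hA'B' hlt hBD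
  have hPeq : univ.filter (fun σ : Equiv.Perm (Fin n) => ∃ B ∈ Mid, seg σ B)
      = Mid.biUnion (fun B => univ.filter fun σ : Equiv.Perm (Fin n) => seg σ B) := by
    ext σ
    simp only [mem_filter, mem_univ, true_and, mem_biUnion]
  have pd : Set.PairwiseDisjoint (↑Mid)
      (fun B => univ.filter fun σ : Equiv.Perm (Fin n) => seg σ B) :=
    fun B hB B' hB' hne => hdisj B hB B' hB' hne
  have hsum1 : ∑ σ ∈ univ.filter (fun σ : Equiv.Perm (Fin n) => ∃ B ∈ Mid, seg σ B),
      (F.filter fun S => seg σ S).card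
      ≤ 2 * (univ.filter (fun σ : Equiv.Perm (Fin n) => ∃ B ∈ Mid, seg σ B)).card := by
    rw [hPeq, Finset.sum_biUnion pd, Finset.card_biUnion hdisj, Finset.mul_sum]
    apply Finset.sum_le_sum
    intro B hB
    obtain ⟨hBF, ⟨A, hAF, hAB⟩, ⟨D, hDF, hBD⟩⟩ := mem_filter.mp hB
    have hABne : A ≠ B := ssne hAB
    have hBDne : B ≠ D := ssne hBD
    have hADne : A ≠ D := ssne (hAB.trans hBD)
    have hcard3 : ∀ σ ∈ (univ.filter fun σ : Equiv.Perm (Fin n) => seg σ B),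
        (F.filter fun S => seg σ S).card
          = (if seg σ A then 1 else 0) + (1 + (if seg σ D then 1 else 0)) := by
      intro σ hσ
      have hsB : seg σ B := (mem_filter.mp hσ).2
      have heq : F.filter (fun S => seg σ S)
          = ({A, B, D} : Finset (Finset (Fin n))).filter (fun S => seg σ S) := by
        ext S
        simp only [mem_filter, mem_insert, mem_singleton]
        constructor
        · rintro ⟨hSF, hsS⟩
          refine ⟨?_, hsS⟩
          by_cases hSB : S = B
          · exact Or.inr (Or.inl hSB)
          · rcases seg_ssubset hsS hsB hSB with hlt | hlt
            · exact Or.inl (below hAF hBF hDF hSF hAB hBD hlt)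
            · exact Or.inr (Or.inr (above hAF hBF hDF hSF hAB hBD hlt))
        · rintro ⟨hS, hsS⟩
          refine ⟨?_, hsS⟩
          rcases hS with rfl | rfl | rfl <;> assumption
      rw [heq, Finset.card_filter]
      rw [Finset.sum_insert (by simp [hABne, hADne]),
        Finset.sum_insert (by simp [hBDne]), Finset.sum_singleton]
      rw [if_pos hsB]
    rw [Finset.sum_congr rfl hcard3]
    rw [Finset.sum_add_distrib, Finset.sum_add_distrib, Finset.sum_const, smul_eq_mul, mul_one]
    rw [← Finset.card_filter, ← Finset.card_filter, Finset.filter_filter, Finset.filter_filter]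
    have cA : (univ.filter fun σ : Equiv.Perm (Fin n) => seg σ B ∧ seg σ A).card
        = A.card.factorial * ((B.card - A.card).factorial * (n - B.card).factorial) := by
      have hcomm : (univ.filter fun σ : Equiv.Perm (Fin n) => seg σ B ∧ seg σ A)
          = (univ.filter fun σ : Equiv.Perm (Fin n) => seg σ A ∧ seg σ B) := by
        apply filter_congr
        intro σ _
        exact and_comm
      rw [hcomm, count_pair hAB.subset]
    have cD : (univ.filter fun σ : Equiv.Perm (Fin n) => seg σ B ∧ seg σ D).card
        = B.card.factorial * ((D.card - B.card).factorial * (n - D.card).factorial) :=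
      count_pair hBD.subset
    rw [cA, cD, count_single B]
    -- numeric facts
    have hA1 : 1 ≤ A.card := by
      rcases Finset.eq_empty_or_nonempty A with rfl | hne
      · exact absurd hAF hempty
      · exact Finset.card_pos.mpr hne
    have hab' : A.card < B.card := Finset.card_lt_card hAB
    have hbd' : B.card < D.card := Finset.card_lt_card hBD
    have hdn : D.card < n := by
      have hDne : D ≠ Finset.univ := fun e => hfull (e ▸ hDF)
      have := Finset.card_lt_card (Finset.ssubset_univ_iff.mpr hDne)
      simpa using this
    have h1 : 2 * (A.card.factorial * ((B.card - A.card).factorial * (n - B.card).factorial))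
        ≤ B.card.factorial * (n - B.card).factorial := by
      have hx := aux_fact hA1 hab'
      calc 2 * (A.card.factorial * ((B.card - A.card).factorial * (n - B.card).factorial))
          = (2 * (A.card.factorial * (B.card - A.card).factorial)) * (n - B.card).factorial := by
            ring
        _ ≤ B.card.factorial * (n - B.card).factorial := Nat.mul_le_mul_right _ hx
    have h2 : 2 * (B.card.factorial * ((D.card - B.card).factorial * (n - D.card).factorial))
        ≤ B.card.factorial * (n - B.card).factorial := by
      have hx := aux_fact (show 1 ≤ D.card - B.card by omega)
        (show D.card - B.card < n - B.card by omega)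
      rw [show n - B.card - (D.card - B.card) = n - D.card from by omega] at hx
      calc 2 * (B.card.factorial * ((D.card - B.card).factorial * (n - D.card).factorial))
          = B.card.factorial * (2 * ((D.card - B.card).factorial * (n - D.card).factorial)) := by
            ring
        _ ≤ B.card.factorial * (n - B.card).factorial := Nat.mul_le_mul_left _ hx
    omega
  have hsum2 : ∑ σ ∈ univ.filter (fun σ : Equiv.Perm (Fin n) => ¬ ∃ B ∈ Mid, seg σ B),
      (F.filter fun S => seg σ S).card
      ≤ 2 * (univ.filter (fun σ : Equiv.Perm (Fin n) => ¬ ∃ B ∈ Mid, seg σ B)).card := by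
    rw [mul_comm]
    have := Finset.sum_le_card_nsmul
      (univ.filter (fun σ : Equiv.Perm (Fin n) => ¬ ∃ B ∈ Mid, seg σ B))
      (fun σ => (F.filter fun S => seg σ S).card) 2 ?_
    · simpa [smul_eq_mul] using this
    intro σ hσ
    have hnP : ¬ ∃ B ∈ Mid, seg σ B := (mem_filter.mp hσ).2
    by_contra hgt
    push_neg at hgt
    obtain ⟨S1, S2, S3, h1, h2, h3, h12, h13, h23⟩ := Finset.two_lt_card_iff.mp hgt
    obtain ⟨h1F, h1s⟩ := mem_filter.mp h1
    obtain ⟨h2F, h2s⟩ := mem_filter.mp h2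
    obtain ⟨h3F, h3s⟩ := mem_filter.mp h3
    have mk : ∀ {X Y Z : Finset (Fin n)}, X ∈ F → Y ∈ F → Z ∈ F → seg σ Y →
        X ⊂ Y → Y ⊂ Z → False := by
      intro X Y Z hX hY hZ hsY hXY hYZ
      exact hnP ⟨Y, mem_filter.mpr ⟨hY, ⟨X, hX, hXY⟩, ⟨Z, hZ, hYZ⟩⟩, hsY⟩
    rcases seg_ssubset h1s h2s h12 with a12 | a21 <;>
      rcases seg_ssubset h1s h3s h13 with a13 | a31 <;>
        rcases seg_ssubset h2s h3s h23 with a23 | a32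
    · exact mk h1F h2F h3F h2s a12 a23
    · exact mk h1F h3F h2F h3s a13 a32
    · exact mk h3F h1F h2F h1s a31 a12
    · exact mk h3F h1F h2F h1s a31 a12
    · exact mk h2F h1F h3F h1s a21 a13
    · exact (ssne ((a13.trans a32).trans a21)) rfl
    · exact mk h2F h3F h1F h3s a23 a31
    · exact mk h3F h2F h1F h2s a32 a21
  calc ∑ σ ∈ univ.filter (fun σ : Equiv.Perm (Fin n) => ∃ B ∈ Mid, seg σ B),
        (F.filter fun S => seg σ S).card
      + ∑ σ ∈ univ.filter (fun σ : Equiv.Perm (Fin n) => ¬ ∃ B ∈ Mid, seg σ B),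
        (F.filter fun S => seg σ S).card
      ≤ 2 * (univ.filter (fun σ : Equiv.Perm (Fin n) => ∃ B ∈ Mid, seg σ B)).card
        + 2 * (univ.filter (fun σ : Equiv.Perm (Fin n) => ¬ ∃ B ∈ Mid, seg σ B)).card :=
        Nat.add_le_add hsum1 hsum2
    _ = 2 * ((univ.filter (fun σ : Equiv.Perm (Fin n) => ∃ B ∈ Mid, seg σ B)).card
        + (univ.filter (fun σ : Equiv.Perm (Fin n) => ¬ ∃ B ∈ Mid, seg σ B)).card) := by ring
    _ = 2 * (univ : Finset (Equiv.Perm (Fin n))).card := by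
        rw [Finset.card_filter_add_card_filter_not]
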